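/- arXiv:1407.5155 — 2 statements merged into one kernel-verified Lean document; each statement's English description precedes it below -/
import Mathlib

section
/- Let D, D° ∈ ℝ^{m×p} both have unit ℓ₂-norm columns and satisfy ‖D − D°‖_F ≤ r. Then for every k ≤ p, μ_k(D) ≤ μ_k(D°) + √k · r · (2 + μ_{k−1}(D°)). -/
open MeasureTheory Matrix Finset
open scoped ENNReal NNReal

noncomputable section

/-- squared ℓ² norm of a vector -/
def l2sq {n : Type*} [Fintype n] (v : n → ℝ) : ℝ := ∑ i, v i ^ 2

/-- ℓ² norm of a vector -/
def l2 {n : Type*} [Fintype n] (v : n → ℝ) : ℝ := Real.sqrt (l2sq v)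

/-- ℓ¹ norm of a vector -/
def l1 {n : Type*} [Fintype n] (v : n → ℝ) : ℝ := ∑ i, |v i|

/-- ℓ^∞ (sup) norm of a vector -/
def linf {n : Type*} (v : n → ℝ) : ℝ := sSup (Set.range fun i => |v i|)

/-- squared Frobenius norm -/
def frobSq {n q : Type*} [Fintype n] [Fintype q] (A : Matrix n q ℝ) : ℝ :=
  ∑ i, ∑ j, A i j ^ 2

/-- Frobenius norm -/
def frob {n q : Type*} [Fintype n] [Fintype q] (A : Matrix n q ℝ) : ℝ :=
  Real.sqrt (frobSq A)

/-- spectral (operator ℓ²→ℓ²) norm -/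
def spec {n q : Type*} [Fintype n] [Fintype q] (A : Matrix n q ℝ) : ℝ :=
  sSup {t : ℝ | ∃ x : q → ℝ, l2 x ≤ 1 ∧ t = l2 (A.mulVec x)}

/-- operator ℓ∞→ℓ∞ norm: max row sum of absolute values -/
def opInf {n q : Type*} [Fintype q] (A : Matrix n q ℝ) : ℝ :=
  sSup (Set.range fun i => ∑ j, |A i j|)

/-- j-th column of a matrix -/
def col {m p : ℕ} (D : Matrix (Fin m) (Fin p) ℝ) (j : Fin p) : Fin m → ℝ :=
  fun i => D i j

/-- the oblique manifold: matrices with unit ℓ²-norm columns -/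
def Oblique {m p : ℕ} (D : Matrix (Fin m) (Fin p) ℝ) : Prop :=
  ∀ j, l2sq (_root_.col D j) = 1

/-- cumulative coherence μ_k -/
def mu {m p : ℕ} (k : ℕ) (D : Matrix (Fin m) (Fin p) ℝ) : ℝ :=
  sSup {t : ℝ | ∃ J : Finset (Fin p), J.card ≤ k ∧ ∃ j, j ∉ J ∧
    t = ∑ i ∈ J, |∑ r, D r i * D r j|}

/-- lower restricted isometry constant δ̲_k -/
def deltaLow {m p : ℕ} (k : ℕ) (D : Matrix (Fin m) (Fin p) ℝ) : ℝ :=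
  sInf {δ : ℝ | 0 ≤ δ ∧ ∀ J : Finset (Fin p), J.card = k →
    ∀ z : Fin p → ℝ, (∀ i, i ∉ J → z i = 0) →
      (1 - δ) * l2sq z ≤ l2sq (D.mulVec z)}

/-- upper restricted isometry constant δ̄_k -/
def deltaUp {m p : ℕ} (k : ℕ) (D : Matrix (Fin m) (Fin p) ℝ) : ℝ :=
  sInf {δ : ℝ | 0 ≤ δ ∧ ∀ J : Finset (Fin p), J.card = k →
    ∀ z : Fin p → ℝ, (∀ i, i ∉ J → z i = 0) →
      l2sq (D.mulVec z) ≤ (1 + δ) * l2sq z}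

/-- submatrix D_J of the columns indexed by J -/
def colsub {m p : ℕ} (D : Matrix (Fin m) (Fin p) ℝ) (J : Finset (Fin p)) :
    Matrix (Fin m) J ℝ := fun i j => D i j.1

/-- Gram matrix D_Jᵀ D_J -/
def gram {m p : ℕ} (D : Matrix (Fin m) (Fin p) ℝ) (J : Finset (Fin p)) :
    Matrix J J ℝ := (colsub D J)ᵀ * colsub D J

/-- Θ_J(D) = (D_Jᵀ D_J)⁻¹ -/
def theta {m p : ℕ} (D : Matrix (Fin m) (Fin p) ℝ) (J : Finset (Fin p)) :
    Matrix J J ℝ := (gram D J)⁻¹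

/-- pseudo-inverse D_J⁺ = Θ_J D_Jᵀ -/
def pinv {m p : ℕ} (D : Matrix (Fin m) (Fin p) ℝ) (J : Finset (Fin p)) :
    Matrix J (Fin m) ℝ := theta D J * (colsub D J)ᵀ

/-- orthogonal projector P_J(D) = D_J Θ_J D_Jᵀ -/
def proj {m p : ℕ} (D : Matrix (Fin m) (Fin p) ℝ) (J : Finset (Fin p)) :
    Matrix (Fin m) (Fin m) ℝ := colsub D J * pinv D J

/-- Lasso objective L_x(D, α) -/
def lasso {m p : ℕ} (lam : ℝ) (x : Fin m → ℝ) (D : Matrix (Fin m) (Fin p) ℝ)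
    (a : Fin p → ℝ) : ℝ :=
  (1/2) * l2sq (fun i => x i - D.mulVec a i) + lam * l1 a

/-- f_x(D) = inf_α L_x(D, α) -/
def fobj {m p : ℕ} (lam : ℝ) (x : Fin m → ℝ) (D : Matrix (Fin m) (Fin p) ℝ) : ℝ :=
  ⨅ a : Fin p → ℝ, lasso lam x D a

/-- φ_x(D|s) for a sign vector s with support J -/
def phi {m p : ℕ} (lam : ℝ) (x : Fin m → ℝ) (D : Matrix (Fin m) (Fin p) ℝ)
    (J : Finset (Fin p)) (s : Fin p → ℝ) : ℝ :=
  (1/2) * (l2sq x - ∑ a : J, ∑ b : J,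
    ((colsub D J)ᵀ.mulVec x a - lam * s a.1) * theta D J a b
      * ((colsub D J)ᵀ.mulVec x b - lam * s b.1))

/-- α̂_x(D|s): the closed-form candidate minimizer with sign pattern s and support J -/
def alphaHat {m p : ℕ} (lam : ℝ) (x : Fin m → ℝ) (D : Matrix (Fin m) (Fin p) ℝ)
    (J : Finset (Fin p)) (s : Fin p → ℝ) : Fin p → ℝ :=
  fun i => if h : i ∈ J then
    (pinv D J).mulVec x ⟨i, h⟩ - lam * (theta D J).mulVec (fun a => s a.1) ⟨i, h⟩
  else 0

/-- sign vector of a coefficient vector -/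
def sgnv {p : ℕ} (a : Fin p → ℝ) : Fin p → ℝ := fun i => Real.sign (a i)

/-- the noisy signal x = D° α° + ε -/
def xsig {m p : ℕ} (Do : Matrix (Fin m) (Fin p) ℝ) (a : Fin p → ℝ) (e : Fin m → ℝ) :
    Fin m → ℝ := fun i => Do.mulVec a i + e i

/-- average over all subsets J ⊆ {1,…,p} of size k -/
def EJ {p : ℕ} (k : ℕ) (f : Finset (Fin p) → ℝ) : ℝ :=
  ((p.choose k : ℝ))⁻¹ * ∑ S ∈ Finset.powersetCard k (Finset.univ : Finset (Fin p)), f S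

/-- the constant C_min -/
def CminV {m p : ℕ} (k : ℕ) (Do : Matrix (Fin m) (Fin p) ℝ) (Ea2 Ea1 : ℝ) : ℝ :=
  24 * (Ea1 / Real.sqrt Ea2) ^ 2 * (spec Do + 1) * ((k : ℝ) / (p : ℝ)) *
    frob (Doᵀ * Do - (1 : Matrix (Fin p) (Fin p) ℝ))

/-- the constant C_max -/
def CmaxV {m p : ℕ} (k : ℕ) (Do : Matrix (Fin m) (Fin p) ℝ) (Ea1 Malpha : ℝ) : ℝ :=
  (2/7) * (Ea1 / Malpha) * (1 - 2 * mu k Do)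

/-- The Basic signal model (Assumption 1 together with the generative mechanism):
J is uniform over size-k supports, α° is supported on J with white coefficients and signs,
and the noise is decorrelated from the coefficients and white.  Conditional expectations given
J are expressed as integrals over the events {J = S}. -/
structure IsBasicModel {m p : ℕ} (k : ℕ) {Ω : Type*} [MeasurableSpace Ω] (μ : Measure Ω)
    (Jv : Ω → Finset (Fin p)) (av : Ω → Fin p → ℝ) (ev : Ω → Fin m → ℝ)
    (Ea2 Ea1 Ee2 : ℝ) : Prop where
  prob : IsProbabilityMeasure μ
  measJ : ∀ S : Finset (Fin p), MeasurableSet {ω | Jv ω = S}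
  measa : ∀ i, Measurable fun ω => av ω i
  mease : ∀ i, Measurable fun ω => ev ω i
  Ea2_pos : 0 < Ea2
  Ea1_pos : 0 < Ea1
  unif : ∀ S : Finset (Fin p), S.card = k →
    μ {ω | Jv ω = S} = ((p.choose k : ℝ≥0∞))⁻¹
  support : ∀ᵐ ω ∂μ, ∀ i, i ∉ Jv ω → av ω i = 0
  coeffWhite : ∀ S : Finset (Fin p), S.card = k → ∀ i ∈ S, ∀ j ∈ S,
    ∫ ω in {ω | Jv ω = S}, av ω i * av ω j ∂μ
      = (if i = j then Ea2 else 0) * (μ {ω | Jv ω = S}).toReal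
  signWhite : ∀ S : Finset (Fin p), S.card = k → ∀ i ∈ S, ∀ j ∈ S,
    ∫ ω in {ω | Jv ω = S}, Real.sign (av ω i) * Real.sign (av ω j) ∂μ
      = (if i = j then 1 else 0) * (μ {ω | Jv ω = S}).toReal
  coeffSign : ∀ S : Finset (Fin p), S.card = k → ∀ i ∈ S, ∀ j ∈ S,
    ∫ ω in {ω | Jv ω = S}, av ω i * Real.sign (av ω j) ∂μ
      = (if i = j then Ea1 else 0) * (μ {ω | Jv ω = S}).toReal
  noiseCoeff : ∀ S : Finset (Fin p), S.card = k → ∀ i : Fin m, ∀ j ∈ S,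
    ∫ ω in {ω | Jv ω = S}, ev ω i * av ω j ∂μ = 0
  noiseSign : ∀ S : Finset (Fin p), S.card = k → ∀ i : Fin m, ∀ j ∈ S,
    ∫ ω in {ω | Jv ω = S}, ev ω i * Real.sign (av ω j) ∂μ = 0
  noiseWhite : ∀ S : Finset (Fin p), S.card = k → ∀ i j : Fin m,
    ∫ ω in {ω | Jv ω = S}, ev ω i * ev ω j ∂μ
      = (if i = j then Ee2 else 0) * (μ {ω | Jv ω = S}).toReal

/-- The Bounded signal model (Assumption 2): almost sure lower bound on nonzero coefficients,
and almost sure ℓ² bounds on the coefficient vector and the noise. -/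
structure IsBoundedModel {m p : ℕ} {Ω : Type*} [MeasurableSpace Ω] (μ : Measure Ω)
    (Jv : Ω → Finset (Fin p)) (av : Ω → Fin p → ℝ) (ev : Ω → Fin m → ℝ)
    (alphaMin Malpha Meps : ℝ) : Prop where
  alphaMin_pos : 0 < alphaMin
  Malpha_pos : 0 < Malpha
  coeffFloor : ∀ᵐ ω ∂μ, ∀ i ∈ Jv ω, alphaMin ≤ |av ω i|
  coeffBound : ∀ᵐ ω ∂μ, l2 (av ω) ≤ Malpha
  noiseBound : ∀ᵐ ω ∂μ, l2 (ev ω) ≤ Meps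

end
section CoherenceAux

open Finset

private lemma cs_abs {ι : Type*} (s : Finset ι) (u v : ι → ℝ) :
    |∑ i ∈ s, u i * v i| ≤ Real.sqrt (∑ i ∈ s, u i ^ 2) * Real.sqrt (∑ i ∈ s, v i ^ 2) := by
  rw [← Real.sqrt_mul (Finset.sum_nonneg fun i _ => sq_nonneg _), ← Real.sqrt_sq_eq_abs]
  exact Real.sqrt_le_sqrt (Finset.sum_mul_sq_le_sq_mul_sq s u v)

private lemma mu_bdd {m p : ℕ} (k : ℕ) (D : Matrix (Fin m) (Fin p) ℝ) :
    BddAbove {t : ℝ | ∃ J : Finset (Fin p), J.card ≤ k ∧ ∃ j, j ∉ J ∧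
      t = ∑ i ∈ J, |∑ r, D r i * D r j|} := by
  apply Set.Finite.bddAbove
  apply Set.Finite.subset (Set.finite_range fun q : Finset (Fin p) × Fin p =>
    ∑ i ∈ q.1, |∑ r, D r i * D r q.2|)
  rintro t ⟨J, -, j, -, rfl⟩
  exact ⟨(J, j), rfl⟩

private lemma le_mu {m p : ℕ} {k : ℕ} (D : Matrix (Fin m) (Fin p) ℝ) {J : Finset (Fin p)}
    {j : Fin p} (hJ : J.card ≤ k) (hj : j ∉ J) :
    ∑ i ∈ J, |∑ r, D r i * D r j| ≤ mu k D :=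
  le_csSup (mu_bdd k D) ⟨J, hJ, j, hj, rfl⟩

private lemma mu_nonneg {m p : ℕ} (k : ℕ) (D : Matrix (Fin m) (Fin p) ℝ) : 0 ≤ mu k D := by
  rcases Nat.eq_zero_or_pos p with hp | hp
  · subst hp
    have he : {t : ℝ | ∃ J : Finset (Fin 0), J.card ≤ k ∧ ∃ j, j ∉ J ∧
        t = ∑ i ∈ J, |∑ r, D r i * D r j|} = ∅ := by
      ext t; simp
    rw [show mu k D = sSup {t : ℝ | ∃ J : Finset (Fin 0), J.card ≤ k ∧ ∃ j, j ∉ J ∧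
        t = ∑ i ∈ J, |∑ r, D r i * D r j|} from rfl, he, Real.sSup_empty]
  · have h := le_mu (k := k) D (J := (∅ : Finset (Fin p))) (j := ⟨0, hp⟩)
      (by simp) (by simp)
    simpa using h

private lemma col_sqrt_le_frob {m p : ℕ} (A : Matrix (Fin m) (Fin p) ℝ) (j : Fin p) :
    Real.sqrt (∑ i, A i j ^ 2) ≤ frob A := by
  apply Real.sqrt_le_sqrt
  rw [frobSq]
  have h1 : (∑ i, ∑ j', A i j' ^ 2) = ∑ j', ∑ i, A i j' ^ 2 := Finset.sum_comm
  rw [h1]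
  exact Finset.single_le_sum (f := fun j' => ∑ i, A i j' ^ 2)
    (fun j' _ => Finset.sum_nonneg fun i _ => sq_nonneg _) (Finset.mem_univ j)

private lemma sign_abs_le_one (x : ℝ) : |Real.sign x| ≤ 1 := by
  rcases lt_trichotomy x 0 with h | h | h
  · rw [Real.sign_of_neg h]; norm_num
  · rw [h, Real.sign_zero]; norm_num
  · rw [Real.sign_of_pos h]; norm_num

private lemma sign_mul_eq_abs (x : ℝ) : Real.sign x * x = |x| := by
  rcases lt_trichotomy x 0 with h | h | h
  · rw [Real.sign_of_neg h, abs_of_neg h]; ring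
  · simp [h]
  · rw [Real.sign_of_pos h, abs_of_pos h]; ring

end CoherenceAux

private lemma sqrt_le_self' {x : ℝ} (hx : 1 ≤ x) : Real.sqrt x ≤ x := by
  calc Real.sqrt x ≤ Real.sqrt (x ^ 2) := Real.sqrt_le_sqrt (by nlinarith)
    _ = x := Real.sqrt_sq (by linarith)

private lemma partB {m p : ℕ} (Do : Matrix (Fin m) (Fin p) ℝ) (hDo : Oblique Do)
    {k : ℕ} {J : Finset (Fin p)} (hJ : J.card ≤ k) (v : Fin m → ℝ) :
    (∑ i ∈ J, |∑ x, Do x i * v x|)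
      ≤ Real.sqrt k * (1 + mu (k - 1) Do) * Real.sqrt (∑ x, v x ^ 2) := by
  classical
  set s : Fin p → ℝ := fun i => Real.sign (∑ x, Do x i * v x) with hs
  have hs1 : ∀ i, |s i| ≤ 1 := by
    intro i; simp only [hs]; exact sign_abs_le_one _
  have hmu0 : 0 ≤ mu (k - 1) Do := mu_nonneg _ _
  have hDoi : ∀ i : Fin p, (∑ x, Do x i * Do x i) = 1 := by
    intro i; have := hDo i; simpa [l2sq, _root_.col, sq] using this
  have e1 : (∑ i ∈ J, |∑ x, Do x i * v x|)
      = ∑ x, (∑ i ∈ J, s i * Do x i) * v x := by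
    calc ∑ i ∈ J, |∑ x, Do x i * v x|
        = ∑ i ∈ J, s i * ∑ x, Do x i * v x := by
          refine Finset.sum_congr rfl fun i _ => ?_
          simp only [hs]
          exact (sign_mul_eq_abs _).symm
      _ = ∑ i ∈ J, ∑ x, s i * (Do x i * v x) := by
          refine Finset.sum_congr rfl fun i _ => ?_
          rw [Finset.mul_sum]
      _ = ∑ x, ∑ i ∈ J, s i * (Do x i * v x) := Finset.sum_comm
      _ = ∑ x, (∑ i ∈ J, s i * Do x i) * v x := by
          refine Finset.sum_congr rfl fun x _ => ?_
          rw [Finset.sum_mul]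
          exact Finset.sum_congr rfl fun i _ => by ring
  have e2 : (∑ x, (∑ i ∈ J, s i * Do x i) ^ 2)
      = ∑ i ∈ J, ∑ i' ∈ J, s i * s i' * ∑ x, Do x i * Do x i' := by
    calc ∑ x, (∑ i ∈ J, s i * Do x i) ^ 2
        = ∑ x, ∑ i ∈ J, ∑ i' ∈ J, (s i * Do x i) * (s i' * Do x i') := by
          refine Finset.sum_congr rfl fun x _ => ?_
          rw [sq, Finset.sum_mul_sum]
      _ = ∑ i ∈ J, ∑ x, ∑ i' ∈ J, (s i * Do x i) * (s i' * Do x i') := Finset.sum_comm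
      _ = ∑ i ∈ J, ∑ i' ∈ J, ∑ x, (s i * Do x i) * (s i' * Do x i') := by
          exact Finset.sum_congr rfl fun i _ => Finset.sum_comm
      _ = ∑ i ∈ J, ∑ i' ∈ J, s i * s i' * ∑ x, Do x i * Do x i' := by
          refine Finset.sum_congr rfl fun i _ => Finset.sum_congr rfl fun i' _ => ?_
          rw [Finset.mul_sum]
          exact Finset.sum_congr rfl fun x _ => by ring
  have e3 : ∀ i ∈ J, (∑ i' ∈ J, s i * s i' * ∑ x, Do x i * Do x i')
      ≤ 1 + mu (k - 1) Do := by
    intro i hi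
    rw [← Finset.add_sum_erase _ _ hi]
    have hdiag : s i * s i * ∑ x, Do x i * Do x i ≤ 1 := by
      rw [hDoi i, mul_one]
      have h1 := hs1 i
      have h2 : -1 ≤ s i := by have := neg_abs_le (s i); linarith
      have h3 : s i ≤ 1 := le_trans (le_abs_self _) h1
      nlinarith
    have hcard : (J.erase i).card ≤ k - 1 := by
      rw [Finset.card_erase_of_mem hi]
      exact Nat.sub_le_sub_right hJ 1
    have hoff : (∑ i' ∈ J.erase i, s i * s i' * ∑ x, Do x i * Do x i')
        ≤ mu (k - 1) Do := by
      calc ∑ i' ∈ J.erase i, s i * s i' * ∑ x, Do x i * Do x i'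
          ≤ ∑ i' ∈ J.erase i, |∑ x, Do x i' * Do x i| := by
            refine Finset.sum_le_sum fun i' _ => ?_
            have hcomm : (∑ x, Do x i * Do x i') = ∑ x, Do x i' * Do x i :=
              Finset.sum_congr rfl fun x _ => mul_comm _ _
            rw [hcomm]
            calc s i * s i' * (∑ x, Do x i' * Do x i)
                ≤ |s i * s i' * (∑ x, Do x i' * Do x i)| := le_abs_self _
              _ = |s i| * |s i'| * |∑ x, Do x i' * Do x i| := by rw [abs_mul, abs_mul]
              _ ≤ 1 * 1 * |∑ x, Do x i' * Do x i| := by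
                  apply mul_le_mul_of_nonneg_right _ (abs_nonneg _)
                  exact mul_le_mul (hs1 i) (hs1 i') (abs_nonneg _) zero_le_one
              _ = |∑ x, Do x i' * Do x i| := by ring
        _ ≤ mu (k - 1) Do := le_mu Do hcard (Finset.notMem_erase i J)
    linarith
  have hw2 : (∑ x, (∑ i ∈ J, s i * Do x i) ^ 2) ≤ (k : ℝ) * (1 + mu (k - 1) Do) := by
    rw [e2]
    calc ∑ i ∈ J, ∑ i' ∈ J, s i * s i' * ∑ x, Do x i * Do x i'
        ≤ ∑ i ∈ J, (1 + mu (k - 1) Do) := Finset.sum_le_sum e3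
      _ = (J.card : ℝ) * (1 + mu (k - 1) Do) := by rw [Finset.sum_const, nsmul_eq_mul]
      _ ≤ (k : ℝ) * (1 + mu (k - 1) Do) := by
          apply mul_le_mul_of_nonneg_right _ (by linarith)
          exact_mod_cast hJ
  have hsqw : Real.sqrt (∑ x, (∑ i ∈ J, s i * Do x i) ^ 2)
      ≤ Real.sqrt k * (1 + mu (k - 1) Do) := by
    calc Real.sqrt (∑ x, (∑ i ∈ J, s i * Do x i) ^ 2)
        ≤ Real.sqrt ((k : ℝ) * (1 + mu (k - 1) Do)) := Real.sqrt_le_sqrt hw2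
      _ = Real.sqrt k * Real.sqrt (1 + mu (k - 1) Do) :=
          Real.sqrt_mul (Nat.cast_nonneg k) _
      _ ≤ Real.sqrt k * (1 + mu (k - 1) Do) := by
          exact mul_le_mul_of_nonneg_left (sqrt_le_self' (by linarith)) (Real.sqrt_nonneg _)
  calc (∑ i ∈ J, |∑ x, Do x i * v x|)
      = ∑ x, (∑ i ∈ J, s i * Do x i) * v x := e1
    _ ≤ |∑ x, (∑ i ∈ J, s i * Do x i) * v x| := le_abs_self _
    _ ≤ Real.sqrt (∑ x, (∑ i ∈ J, s i * Do x i) ^ 2) * Real.sqrt (∑ x, v x ^ 2) :=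
        cs_abs _ _ _
    _ ≤ Real.sqrt k * (1 + mu (k - 1) Do) * Real.sqrt (∑ x, v x ^ 2) :=
        mul_le_mul_of_nonneg_right hsqw (Real.sqrt_nonneg _)

/-- Lemma: stability of the cumulative coherence on a Frobenius ball:
μ_k(D) ≤ μ_k(D°) + √k · r · (2 + μ_{k−1}(D°)). -/
theorem stmt14 {m p : ℕ} (D Do : Matrix (Fin m) (Fin p) ℝ)
    (hD : Oblique D) (hDo : Oblique Do) (r : ℝ) (hr : frob (D - Do) ≤ r)
    (k : ℕ) (hk : k ≤ p) :
    mu k D ≤ mu k Do + Real.sqrt k * r * (2 + mu (k - 1) Do) := by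
  classical
  have hfrob0 : 0 ≤ frob (D - Do) := Real.sqrt_nonneg _
  have hr0 : 0 ≤ r := le_trans hfrob0 hr
  have hmu0 : 0 ≤ mu (k - 1) Do := mu_nonneg _ _
  refine Real.sSup_le ?_ ?_
  · rintro t ⟨J, hJ, j, hj, rfl⟩
    have hDj : (∑ x, D x j ^ 2) = 1 := by simpa [l2sq, _root_.col] using hD j
    have tri : ∑ i ∈ J, |∑ x, D x i * D x j|
        ≤ (∑ i ∈ J, |∑ x, Do x i * Do x j|)
          + ∑ i ∈ J, |(∑ x, D x i * D x j) - ∑ x, Do x i * Do x j| := by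
      rw [← Finset.sum_add_distrib]
      refine Finset.sum_le_sum fun i _ => ?_
      have h := abs_sub_abs_le_abs_sub (∑ x, D x i * D x j) (∑ x, Do x i * Do x j)
      linarith
    have h1 : (∑ i ∈ J, |∑ x, Do x i * Do x j|) ≤ mu k Do := le_mu Do hJ hj
    have dec : ∀ i : Fin p, (∑ x, D x i * D x j) - ∑ x, Do x i * Do x j
        = (∑ x, (D x i - Do x i) * D x j) + ∑ x, Do x i * (D x j - Do x j) := by
      intro i
      rw [← Finset.sum_add_distrib, ← Finset.sum_sub_distrib]
      exact Finset.sum_congr rfl fun x _ => by ring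
    have habs : ∑ i ∈ J, |(∑ x, D x i * D x j) - ∑ x, Do x i * Do x j|
        ≤ (∑ i ∈ J, |∑ x, (D x i - Do x i) * D x j|)
          + ∑ i ∈ J, |∑ x, Do x i * (D x j - Do x j)| := by
      rw [← Finset.sum_add_distrib]
      refine Finset.sum_le_sum fun i _ => ?_
      rw [dec i]
      exact abs_add_le _ _
    have hA : (∑ i ∈ J, |∑ x, (D x i - Do x i) * D x j|) ≤ Real.sqrt k * r := by
      have step : ∀ i ∈ J, |∑ x, (D x i - Do x i) * D x j|
          ≤ Real.sqrt (∑ x, (D x i - Do x i) ^ 2) := by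
        intro i _
        have h := cs_abs Finset.univ (fun x => D x i - Do x i) (fun x => D x j)
        simpa [hDj] using h
      have ha0 : 0 ≤ ∑ i ∈ J, Real.sqrt (∑ x, (D x i - Do x i) ^ 2) :=
        Finset.sum_nonneg fun i _ => Real.sqrt_nonneg _
      have hsub : (∑ i ∈ J, ∑ x, (D x i - Do x i) ^ 2) ≤ frobSq (D - Do) := by
        have h2 : frobSq (D - Do) = ∑ i : Fin p, ∑ x, (D x i - Do x i) ^ 2 := by
          rw [frobSq, Finset.sum_comm]
          simp [Matrix.sub_apply]
        rw [h2]
        exact Finset.sum_le_sum_of_subset_of_nonneg (Finset.subset_univ J)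
          (fun i _ _ => Finset.sum_nonneg fun x _ => sq_nonneg _)
      have hcs : (∑ i ∈ J, Real.sqrt (∑ x, (D x i - Do x i) ^ 2)) ^ 2
          ≤ (J.card : ℝ) * ∑ i ∈ J, ∑ x, (D x i - Do x i) ^ 2 := by
        have h := sq_sum_le_card_mul_sum_sq
          (s := J) (f := fun i => Real.sqrt (∑ x, (D x i - Do x i) ^ 2))
        have heq : ∀ i ∈ J, (Real.sqrt (∑ x, (D x i - Do x i) ^ 2)) ^ 2
            = ∑ x, (D x i - Do x i) ^ 2 := fun i _ =>
          Real.sq_sqrt (Finset.sum_nonneg fun x _ => sq_nonneg _)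
        rw [Finset.sum_congr rfl heq] at h
        exact h
      have hfinal : (∑ i ∈ J, Real.sqrt (∑ x, (D x i - Do x i) ^ 2))
          ≤ Real.sqrt ((k : ℝ) * frobSq (D - Do)) := by
        rw [← Real.sqrt_sq ha0]
        apply Real.sqrt_le_sqrt
        calc (∑ i ∈ J, Real.sqrt (∑ x, (D x i - Do x i) ^ 2)) ^ 2
            ≤ (J.card : ℝ) * ∑ i ∈ J, ∑ x, (D x i - Do x i) ^ 2 := hcs
          _ ≤ (k : ℝ) * frobSq (D - Do) := by
              apply mul_le_mul (by exact_mod_cast hJ) hsub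
                (Finset.sum_nonneg fun i _ =>
                  Finset.sum_nonneg fun x _ => sq_nonneg _) (Nat.cast_nonneg k)
      calc ∑ i ∈ J, |∑ x, (D x i - Do x i) * D x j|
          ≤ ∑ i ∈ J, Real.sqrt (∑ x, (D x i - Do x i) ^ 2) := Finset.sum_le_sum step
        _ ≤ Real.sqrt ((k : ℝ) * frobSq (D - Do)) := hfinal
        _ = Real.sqrt k * frob (D - Do) := by
            rw [Real.sqrt_mul (Nat.cast_nonneg k)]; rfl
        _ ≤ Real.sqrt k * r := mul_le_mul_of_nonneg_left hr (Real.sqrt_nonneg _)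
    have hv2 : Real.sqrt (∑ x, (D x j - Do x j) ^ 2) ≤ r := by
      have h := col_sqrt_le_frob (D - Do) j
      simp only [Matrix.sub_apply] at h
      exact le_trans h hr
    have hB : (∑ i ∈ J, |∑ x, Do x i * (D x j - Do x j)|)
        ≤ Real.sqrt k * (1 + mu (k - 1) Do) * r := by
      calc (∑ i ∈ J, |∑ x, Do x i * (D x j - Do x j)|)
          ≤ Real.sqrt k * (1 + mu (k - 1) Do)
              * Real.sqrt (∑ x, (D x j - Do x j) ^ 2) :=
            partB Do hDo hJ (fun x => D x j - Do x j)
        _ ≤ Real.sqrt k * (1 + mu (k - 1) Do) * r := by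
            apply mul_le_mul_of_nonneg_left hv2
            exact mul_nonneg (Real.sqrt_nonneg _) (by linarith)
    have key : Real.sqrt k * r + Real.sqrt k * (1 + mu (k - 1) Do) * r
        = Real.sqrt k * r * (2 + mu (k - 1) Do) := by ring
    linarith
  · have h0 : 0 ≤ Real.sqrt k * r * (2 + mu (k - 1) Do) :=
      mul_nonneg (mul_nonneg (Real.sqrt_nonneg _) hr0) (by linarith)
    linarith [mu_nonneg k Do]
end

section
/- Let D ∈ ℝ^{m×p} be a frame with lower frame bound A > 0, i.e., A‖u‖₂² ≤ ‖Dᵀu‖₂² for all u ∈ ℝ^m. Then C'(D) ≤ √(p/A). If in addition 1 ≤ k ≤ p and δ̲_k(D) < 1, then C(D) ≤ (2/A)·(p/√k)·(1 + δ̄_k(D))/√(1 − δ̲_k(D)). -/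
open MeasureTheory Matrix Finset
open scoped ENNReal NNReal

/-- C(D) = sup over nonzero u in the column span of D of inf{‖β‖₁ : Dβ = u}/‖u‖₂ -/
noncomputable def Cc {m p : ℕ} (D : Matrix (Fin m) (Fin p) ℝ) : ℝ :=
  sSup {t : ℝ | ∃ u : Fin m → ℝ, u ≠ 0 ∧ (∃ β : Fin p → ℝ, D.mulVec β = u) ∧
    t = (sInf {c : ℝ | ∃ β : Fin p → ℝ, D.mulVec β = u ∧ c = l1 β}) / l2 u}

/-- C'(D) = sup over nonzero u of ‖u‖₂/‖Dᵀu‖_∞ -/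
noncomputable def Cp {m p : ℕ} (D : Matrix (Fin m) (Fin p) ℝ) : ℝ :=
  sSup {t : ℝ | ∃ u : Fin m → ℝ, u ≠ 0 ∧ t = l2 u / linf (Dᵀ.mulVec u)}

section AuxStmt17

lemma l2sq_nonneg' {n : Type*} [Fintype n] (v : n → ℝ) : 0 ≤ l2sq v :=
  Finset.sum_nonneg fun i _ => sq_nonneg _

lemma l2sq_pos' {n : Type*} [Fintype n] {v : n → ℝ} (hv : v ≠ 0) : 0 < l2sq v := by
  obtain ⟨i, hi⟩ := Function.ne_iff.mp hv
  have hi' : v i ≠ 0 := by simpa using hi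
  calc (0:ℝ) < v i ^ 2 := by positivity
    _ ≤ l2sq v := Finset.single_le_sum (fun j _ => sq_nonneg (v j)) (Finset.mem_univ i)

lemma dot_le_l2_mul_l2 {n : Type*} [Fintype n] (u v : n → ℝ) :
    u ⬝ᵥ v ≤ l2 u * l2 v := by
  have h : (∑ i, u i * v i) ^ 2 ≤ (∑ i, u i ^ 2) * ∑ i, v i ^ 2 :=
    Finset.sum_mul_sq_le_sq_mul_sq Finset.univ u v
  calc u ⬝ᵥ v ≤ |u ⬝ᵥ v| := le_abs_self _
    _ = Real.sqrt ((u ⬝ᵥ v) ^ 2) := (Real.sqrt_sq_eq_abs _).symm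
    _ ≤ Real.sqrt (l2sq u * l2sq v) := Real.sqrt_le_sqrt h
    _ = l2 u * l2 v := Real.sqrt_mul (l2sq_nonneg' u) _

lemma l1_le_sqrt_card' {n : Type*} [Fintype n] (v : n → ℝ) :
    l1 v ≤ Real.sqrt ((Fintype.card n : ℝ) * l2sq v) := by
  have h : (∑ i, |v i| * 1) ^ 2 ≤ (∑ i, |v i| ^ 2) * ∑ i : n, (1:ℝ) ^ 2 :=
    Finset.sum_mul_sq_le_sq_mul_sq Finset.univ _ _
  have h1 : l1 v ^ 2 ≤ l2sq v * (Fintype.card n : ℝ) := by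
    simpa [l1, l2sq, sq_abs] using h
  calc l1 v = Real.sqrt (l1 v ^ 2) :=
      (Real.sqrt_sq (Finset.sum_nonneg fun i _ => abs_nonneg _)).symm
    _ ≤ Real.sqrt ((Fintype.card n : ℝ) * l2sq v) := by
      apply Real.sqrt_le_sqrt; linarith [h1]

lemma frobSq_nonneg' {m p : ℕ} (D : Matrix (Fin m) (Fin p) ℝ) : 0 ≤ frobSq D :=
  Finset.sum_nonneg fun i _ => Finset.sum_nonneg fun j _ => sq_nonneg _

lemma l2sq_mulVec_le' {m p : ℕ} (D : Matrix (Fin m) (Fin p) ℝ) (z : Fin p → ℝ) :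
    l2sq (D.mulVec z) ≤ frobSq D * l2sq z := by
  unfold l2sq frobSq Matrix.mulVec dotProduct
  calc ∑ i, (∑ j, D i j * z j) ^ 2
      ≤ ∑ i, ((∑ j, D i j ^ 2) * ∑ j, z j ^ 2) :=
        Finset.sum_le_sum fun i _ => Finset.sum_mul_sq_le_sq_mul_sq _ _ _
    _ = (∑ i, ∑ j, D i j ^ 2) * ∑ j, z j ^ 2 := by rw [← Finset.sum_mul]

lemma deltaUp_set_nonempty {m p : ℕ} (k : ℕ) (D : Matrix (Fin m) (Fin p) ℝ) :
    {δ : ℝ | 0 ≤ δ ∧ ∀ J : Finset (Fin p), J.card = k →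
      ∀ z : Fin p → ℝ, (∀ i, i ∉ J → z i = 0) →
        l2sq (D.mulVec z) ≤ (1 + δ) * l2sq z}.Nonempty := by
  refine ⟨frobSq D, frobSq_nonneg' D, fun J _ z _ => ?_⟩
  have h := l2sq_mulVec_le' D z
  nlinarith [l2sq_nonneg' z]

lemma deltaUp_nonneg' {m p : ℕ} (k : ℕ) (D : Matrix (Fin m) (Fin p) ℝ) :
    0 ≤ deltaUp k D :=
  Real.sInf_nonneg fun _ hδ => hδ.1

lemma deltaLow_nonneg' {m p : ℕ} (k : ℕ) (D : Matrix (Fin m) (Fin p) ℝ) :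
    0 ≤ deltaLow k D :=
  Real.sInf_nonneg fun _ hδ => hδ.1

lemma deltaUp_spec' {m p : ℕ} {k : ℕ} (D : Matrix (Fin m) (Fin p) ℝ)
    {J : Finset (Fin p)} (hJ : J.card = k) {z : Fin p → ℝ}
    (hz : ∀ i, i ∉ J → z i = 0) :
    l2sq (D.mulVec z) ≤ (1 + deltaUp k D) * l2sq z := by
  rcases eq_or_lt_of_le (l2sq_nonneg' z) with h0 | h0
  · have hz0 : z = 0 := by
      by_contra h
      exact absurd h0.symm (ne_of_gt (l2sq_pos' h))
    simp [hz0, l2sq, Matrix.mulVec_zero]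
  · have hle : (l2sq (D.mulVec z) - l2sq z) / l2sq z ≤ deltaUp k D := by
      apply le_csInf (deltaUp_set_nonempty k D)
      intro δ hδ
      have h := hδ.2 J hJ z hz
      rw [div_le_iff₀ h0]
      nlinarith
    have h2 : (l2sq (D.mulVec z) - l2sq z) / l2sq z * l2sq z ≤ deltaUp k D * l2sq z :=
      mul_le_mul_of_nonneg_right hle h0.le
    rw [div_mul_cancel₀ _ (ne_of_gt h0)] at h2
    linarith

lemma col_l2sq_le' {m p : ℕ} {k : ℕ} (D : Matrix (Fin m) (Fin p) ℝ)
    (hk1 : 1 ≤ k) (hkp : k ≤ p) (j : Fin p) :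
    l2sq (_root_.col D j) ≤ 1 + deltaUp k D := by
  obtain ⟨J, hjJ, -, hJcard⟩ :=
    Finset.exists_subsuperset_card_eq (Finset.subset_univ ({j} : Finset (Fin p)))
      (by simpa using hk1) (by simpa using hkp)
  have hsupp : ∀ i, i ∉ J → (Pi.single j 1 : Fin p → ℝ) i = 0 := by
    intro i hi
    have hne : i ≠ j := fun h => hi (hjJ (by simp [h]))
    exact Pi.single_eq_of_ne hne 1
  have h := deltaUp_spec' D hJcard hsupp
  have h1 : D.mulVec (Pi.single j 1 : Fin p → ℝ) = _root_.col D j := by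
    rw [Matrix.mulVec_single]
    funext i; simp [_root_.col]
  have h2 : l2sq (Pi.single j 1 : Fin p → ℝ) = 1 := by
    simp [l2sq, Pi.single_apply]
  rw [h1, h2, mul_one] at h
  exact h

lemma k_le_m' {m p : ℕ} {k : ℕ} (D : Matrix (Fin m) (Fin p) ℝ)
    (hkp : k ≤ p) (hlow : deltaLow k D < 1) : k ≤ m := by
  by_contra hkm
  push_neg at hkm
  have h1 : (1:ℝ) ≤ deltaLow k D := by
    apply le_csInf
    · exact ⟨1, by norm_num, fun J _ z _ => by
        simpa using l2sq_nonneg' (D.mulVec z)⟩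
    · rintro δ ⟨-, hδ⟩
      obtain ⟨J, -, hJcard⟩ := Finset.exists_subset_card_eq
        (show k ≤ (Finset.univ : Finset (Fin p)).card by simpa using hkp)
      set g : (J → ℝ) →ₗ[ℝ] (Fin m → ℝ) := (colsub D J).mulVecLin with hg
      have hninj : ¬ Function.Injective g := by
        intro hinj
        have := LinearMap.finrank_le_finrank_of_injective hinj
        simp [Module.finrank_pi, hJcard] at this
        omega
      rw [Function.not_injective_iff] at hninj
      obtain ⟨a, b, hab, hne⟩ := hninj
      set w := a - b with hw
      have hw0 : w ≠ 0 := sub_ne_zero.mpr hne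
      have hgw : g w = 0 := by rw [hw, map_sub, hab, sub_self]
      set z : Fin p → ℝ := fun i => if h : i ∈ J then w ⟨i, h⟩ else 0 with hz
      have hzsupp : ∀ i, i ∉ J → z i = 0 := fun i hi => dif_neg hi
      have hDz : D.mulVec z = 0 := by
        have heq : D.mulVec z = (colsub D J).mulVec w := by
          funext i
          show ∑ i', D i i' * z i' = ∑ a, colsub D J i a * w a
          rw [Finset.univ_eq_attach]
          calc ∑ i', D i i' * z i'
              = ∑ i' ∈ J, D i i' * z i' := (Finset.sum_subset (Finset.subset_univ J)
                (fun x _ hx => by rw [hzsupp x hx, mul_zero])).symm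
            _ = ∑ a ∈ J.attach, D i a.1 * z a.1 := (Finset.sum_attach J _).symm
            _ = ∑ a ∈ J.attach, colsub D J i a * w a := Finset.sum_congr rfl (fun a _ => by
                simp [colsub, hz, a.2])
        rw [heq, ← Matrix.mulVecLin_apply, ← hg, hgw]
      have hzne : z ≠ 0 := by
        obtain ⟨a', ha'⟩ := Function.ne_iff.mp hw0
        intro h
        apply ha'
        have := congrFun h a'.1
        simpa [hz, a'.2] using this
      have hineq := hδ J hJcard z hzsupp
      rw [hDz] at hineq
      have hl2 : l2sq (0 : Fin m → ℝ) = 0 := by simp [l2sq]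
      rw [hl2] at hineq
      nlinarith [l2sq_pos' hzne]
  linarith

lemma Cp_le_sqrt' {m p : ℕ} (D : Matrix (Fin m) (Fin p) ℝ) (A : ℝ) (hA : 0 < A)
    (hframe : ∀ u : Fin m → ℝ, A * l2sq u ≤ l2sq (Dᵀ.mulVec u)) :
    Cp D ≤ Real.sqrt ((p : ℝ) / A) := by
  apply Real.sSup_le _ (Real.sqrt_nonneg _)
  rintro t ⟨u, hu, rfl⟩
  have hu2 : 0 < l2sq u := l2sq_pos' hu
  set L := linf (Dᵀ.mulVec u) with hL
  have hbound : ∀ j, |Dᵀ.mulVec u j| ≤ L := fun j =>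
    le_csSup (Set.Finite.bddAbove (Set.finite_range _)) ⟨j, rfl⟩
  have hsum : l2sq (Dᵀ.mulVec u) ≤ (p : ℝ) * L ^ 2 := by
    unfold l2sq
    calc ∑ j, Dᵀ.mulVec u j ^ 2 ≤ ∑ _j : Fin p, L ^ 2 :=
          Finset.sum_le_sum fun j _ => by
            rw [← sq_abs]
            exact pow_le_pow_left₀ (abs_nonneg _) (hbound j) 2
      _ = (p : ℝ) * L ^ 2 := by simp [mul_comm]
  have hAL : A * l2sq u ≤ (p : ℝ) * L ^ 2 := le_trans (hframe u) hsum
  have hPL : 0 < (p : ℝ) * L ^ 2 := lt_of_lt_of_le (mul_pos hA hu2) hAL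
  have hL0 : 0 ≤ L := by
    have hp : 0 < (p : ℝ) := by nlinarith [sq_nonneg L]
    obtain ⟨j⟩ : Nonempty (Fin p) := ⟨⟨0, by exact_mod_cast hp⟩⟩
    exact le_trans (abs_nonneg _) (hbound j)
  have hLne : L ≠ 0 := by
    intro h
    rw [h] at hPL
    simp at hPL
  have hLpos : 0 < L := lt_of_le_of_ne hL0 (Ne.symm hLne)
  rw [div_le_iff₀ hLpos]
  have hx : l2sq u ≤ ((p : ℝ) / A) * L ^ 2 := by
    rw [div_mul_eq_mul_div, le_div_iff₀ hA]
    nlinarith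
  calc l2 u ≤ Real.sqrt (((p : ℝ) / A) * L ^ 2) := Real.sqrt_le_sqrt hx
    _ = Real.sqrt ((p : ℝ) / A) * L := by
        rw [Real.sqrt_mul (by positivity), Real.sqrt_sq hL0]

lemma Cc_le_sqrt' {m p : ℕ} (D : Matrix (Fin m) (Fin p) ℝ) (A : ℝ) (hA : 0 < A)
    (hframe : ∀ u : Fin m → ℝ, A * l2sq u ≤ l2sq (Dᵀ.mulVec u)) :
    Cc D ≤ Real.sqrt ((p : ℝ) / A) := by
  apply Real.sSup_le _ (Real.sqrt_nonneg _)
  rintro t ⟨u, hu, -, rfl⟩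
  set M := D * Dᵀ with hM
  have hquad : ∀ x : Fin m → ℝ, x ⬝ᵥ M.mulVec x = l2sq (Dᵀ.mulVec x) := by
    intro x
    rw [hM, ← Matrix.mulVec_mulVec, Matrix.dotProduct_mulVec, ← Matrix.mulVec_transpose]
    simp [dotProduct, l2sq, sq]
  have hherm : M.IsHermitian := by
    have h := Matrix.isHermitian_mul_conjTranspose_self D
    simpa [Matrix.conjTranspose_eq_transpose_of_trivial] using h
  have hPD : M.PosDef := by
    refine Matrix.posDef_iff_dotProduct_mulVec.mpr ⟨hherm, fun x hx => ?_⟩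
    have h1 : star x = x := by simp
    rw [h1, hquad x]
    exact lt_of_lt_of_le (mul_pos hA (l2sq_pos' hx)) (hframe x)
  have hdet : IsUnit M.det := isUnit_iff_ne_zero.mpr (ne_of_gt hPD.det_pos)
  have hinv : M * M⁻¹ = 1 := Matrix.mul_nonsing_inv M hdet
  set v := M⁻¹.mulVec u with hv
  have hMv : M.mulVec v = u := by
    rw [hv, Matrix.mulVec_mulVec, hinv, Matrix.one_mulVec]
  set β := Dᵀ.mulVec v with hβ
  have hDβ : D.mulVec β = u := by
    rw [hβ, Matrix.mulVec_mulVec, ← hM, hMv]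
  have hβ2 : l2sq β = v ⬝ᵥ u := by rw [hβ, ← hquad v, hMv]
  have hcs : v ⬝ᵥ u ≤ l2 v * l2 u := dot_le_l2_mul_l2 v u
  have hAv : A * l2 v ^ 2 ≤ v ⬝ᵥ u := by
    rw [l2, Real.sq_sqrt (l2sq_nonneg' v), ← hMv, hquad v]
    exact hframe v
  have hβu : l2sq β ≤ l2sq u / A := by
    rw [hβ2]
    rcases eq_or_lt_of_le (Real.sqrt_nonneg (l2sq v) : (0:ℝ) ≤ l2 v) with h0 | h0
    · have hl2v : l2 v = 0 := h0.symm
      rw [hl2v, zero_mul] at hcs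
      have h2 : 0 ≤ l2sq u / A := div_nonneg (l2sq_nonneg' u) hA.le
      linarith
    · have hb : 0 ≤ l2 u := Real.sqrt_nonneg _
      have hab : A * l2 v ≤ l2 u := by nlinarith
      rw [le_div_iff₀ hA]
      have hu2 : l2 u ^ 2 = l2sq u := Real.sq_sqrt (l2sq_nonneg' u)
      nlinarith
  have hl1 : l1 β ≤ Real.sqrt ((p : ℝ) / A) * l2 u := by
    calc l1 β ≤ Real.sqrt ((Fintype.card (Fin p) : ℝ) * l2sq β) := l1_le_sqrt_card' β
      _ ≤ Real.sqrt ((p : ℝ) * (l2sq u / A)) := by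
          apply Real.sqrt_le_sqrt
          simp only [Fintype.card_fin]
          exact mul_le_mul_of_nonneg_left hβu (by positivity)
      _ = Real.sqrt ((p : ℝ) / A) * l2 u := by
          rw [show (p : ℝ) * (l2sq u / A) = ((p : ℝ) / A) * l2sq u by ring,
            Real.sqrt_mul (by positivity)]
          rfl
  have hsInf : sInf {c : ℝ | ∃ β' : Fin p → ℝ, D.mulVec β' = u ∧ c = l1 β'} ≤ l1 β := by
    apply csInf_le
    · exact ⟨0, fun c ⟨β', _, hc⟩ => hc ▸ Finset.sum_nonneg fun i _ => abs_nonneg _⟩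
    · exact ⟨β, hDβ, rfl⟩
  have hl2u : 0 < l2 u := Real.sqrt_pos.mpr (l2sq_pos' hu)
  rw [div_le_iff₀ hl2u]
  exact le_trans hsInf hl1

end AuxStmt17

/-- Lemma: for a frame D with lower frame bound A, C'(D) ≤ √(p/A); if moreover δ̲_k(D) < 1 then
C(D) ≤ (2/A)·(p/√k)·(1+δ̄_k(D))/√(1−δ̲_k(D)). -/
theorem stmt17 {m p : ℕ} (D : Matrix (Fin m) (Fin p) ℝ) (A : ℝ) (hA : 0 < A)
    (hframe : ∀ u : Fin m → ℝ, A * l2sq u ≤ l2sq (Dᵀ.mulVec u)) :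
    Cp D ≤ Real.sqrt ((p : ℝ) / A) ∧
    ∀ k : ℕ, 1 ≤ k → k ≤ p → deltaLow k D < 1 →
      Cc D ≤ (2 / A) * ((p : ℝ) / Real.sqrt k) * (1 + deltaUp k D)
              / Real.sqrt (1 - deltaLow k D) := by
  constructor
  · exact Cp_le_sqrt' D A hA hframe
  · intro k hk1 hkp hlow
    have hkm : k ≤ m := k_le_m' D hkp hlow
    have htrace : A * m ≤ frobSq D := by
      have h : ∀ i : Fin m, A ≤ ∑ j, D i j ^ 2 := by
        intro i
        have h1 := hframe (Pi.single i 1)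
        have h2 : l2sq (Pi.single i 1 : Fin m → ℝ) = 1 := by
          simp [l2sq, Pi.single_apply]
        have h3 : l2sq (Dᵀ.mulVec (Pi.single i 1)) = ∑ j, D i j ^ 2 := by
          rw [Matrix.mulVec_single]
          simp [l2sq, Matrix.transpose_apply]
        rw [h2, mul_one, h3] at h1
        exact h1
      calc A * m = ∑ _i : Fin m, A := by simp [mul_comm]
        _ ≤ ∑ i, ∑ j, D i j ^ 2 := Finset.sum_le_sum fun i _ => h i
        _ = frobSq D := rfl
    have hfrob : frobSq D ≤ (p : ℝ) * (1 + deltaUp k D) := by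
      calc frobSq D = ∑ j : Fin p, l2sq (_root_.col D j) := by
            rw [frobSq, Finset.sum_comm]
            rfl
        _ ≤ ∑ _j : Fin p, (1 + deltaUp k D) :=
            Finset.sum_le_sum fun j _ => col_l2sq_le' D hk1 hkp j
        _ = (p : ℝ) * (1 + deltaUp k D) := by
            simp only [Finset.sum_const, Finset.card_univ, Fintype.card_fin, nsmul_eq_mul]
    have hAk : A * k ≤ (p : ℝ) * (1 + deltaUp k D) := by
      have hkm' : (k : ℝ) ≤ m := by exact_mod_cast hkm
      nlinarith
    refine le_trans (Cc_le_sqrt' D A hA hframe) ?_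
    set δU := deltaUp k D with hδU
    set δL := deltaLow k D with hδL
    have hδU0 : 0 ≤ δU := deltaUp_nonneg' k D
    have hδL0 : 0 ≤ δL := deltaLow_nonneg' k D
    have h1L : 0 < 1 - δL := by linarith
    have hk0 : (0:ℝ) < k := by exact_mod_cast hk1
    have hp0 : (0:ℝ) < p := by exact_mod_cast lt_of_lt_of_le hk1 hkp
    have hsk : 0 < Real.sqrt k := Real.sqrt_pos.mpr hk0
    have hsL : 0 < Real.sqrt (1 - δL) := Real.sqrt_pos.mpr h1L
    have heq : 2 / A * ((p:ℝ) / Real.sqrt k) * (1 + δU) / Real.sqrt (1 - δL)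
        = 2 * p * (1 + δU) / (A * (Real.sqrt k * Real.sqrt (1 - δL))) := by
      field_simp
    have hrhs_nn : 0 ≤ 2 * (p:ℝ) * (1 + δU) / (A * (Real.sqrt k * Real.sqrt (1 - δL))) := by
      apply div_nonneg
      · nlinarith
      · positivity
    rw [heq, ← Real.sqrt_sq hrhs_nn]
    apply Real.sqrt_le_sqrt
    rw [div_pow, mul_pow A, mul_pow (Real.sqrt k), Real.sq_sqrt hk0.le, Real.sq_sqrt h1L.le]
    rw [div_le_div_iff₀ hA (by positivity)]
    have step : A * k * (1 - δL) ≤ 4 * p * (1 + δU) ^ 2 := by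
      nlinarith [hAk, mul_nonneg (mul_pos hA hk0).le hδL0,
        mul_nonneg (mul_nonneg hp0.le hδU0) hδU0, mul_nonneg hp0.le hδU0]
    nlinarith [mul_le_mul_of_nonneg_left step (mul_pos hA hp0).le]
end
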